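/- For the CFL proper-relaxation construction with n facilities, capacity U = n^2, (n-1)U + 1 clients, distances all 0, opening costs f_n = 1 and f_i = 0 for i ≤ n-1: the fractional solution with y_i = 1 (i ≤ n-1), y_n = 1/n^2, x_{nj} = (U/n^2)/((n-1)U+1) and x_{ij} = (1 - x_{nj})/(n-1) for i ≤ n-1 satisfies the classic CFL LP constraints and has cost 1/n^2, while every integral feasible solution must open facility n (since total capacity of the other facilities is (n-1)U < (n-1)U + 1) and hence has cost at least 1; the integrality gap is therefore at least n^2. -/

import Mathlib

private lemma sum_ite_fin {n : ℕ} (i0 : Fin n) (a b : ℝ) :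
    ∑ i : Fin n, (if i = i0 then a else b) = a + ((n : ℝ) - 1) * b := by
  classical
  rw [← Finset.add_sum_erase _ _ (Finset.mem_univ i0), if_pos rfl]
  have h1 : ∑ i ∈ Finset.univ.erase i0, (if i = i0 then a else b)
      = ((n - 1 : ℕ) : ℝ) * b := by
    rw [Finset.sum_congr rfl (fun i hi => if_neg (Finset.ne_of_mem_erase hi))]
    simp [Finset.card_erase_of_mem, Finset.sum_const, nsmul_eq_mul]
  rw [h1]
  have hn : 1 ≤ n := i0.pos
  have : ((n - 1 : ℕ) : ℝ) = (n : ℝ) - 1 := by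
    push_cast [Nat.cast_sub hn]; ring
  rw [this]

/-- CFL proper-relaxation gap instance: `n` facilities, capacity `U = n²`,
`(n-1)U + 1` clients, all distances 0, opening costs `f_n = 1`, `f_i = 0` otherwise.
The fractional solution `y_i = 1 (i < n-1)`, `y_n = 1/n²`,
`x_{nj} = (U/n²)/((n-1)U+1)`, `x_{ij} = (1 - x_{nj})/(n-1)` is feasible for the classic
CFL LP and has cost `1/n²`; every integral feasible solution opens facility `n` and
costs at least 1; the integrality gap is at least `n²`. -/
theorem cfl_proper_gap (n : ℕ) (hn : 2 ≤ n) :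
    let U : ℕ := n ^ 2
    let C := Fin ((n - 1) * U + 1)
    let lastF : Fin n := ⟨n - 1, by omega⟩
    let y : Fin n → ℝ := fun i => if i = lastF then 1 / (n : ℝ) ^ 2 else 1
    let xn : ℝ := ((U : ℝ) / (n : ℝ) ^ 2) / (((n : ℝ) - 1) * U + 1)
    let x : Fin n → C → ℝ := fun i _ => if i = lastF then xn else (1 - xn) / ((n : ℝ) - 1)
    let fcost : Fin n → ℝ := fun i => if i = lastF then 1 else 0
    ((∀ i j, x i j ≤ y i) ∧
     (∀ j, ∑ i, x i j = 1) ∧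
     (∀ i, ∑ j, x i j ≤ (U : ℝ) * y i) ∧
     (∀ i, 0 ≤ y i ∧ y i ≤ 1) ∧ (∀ i j, 0 ≤ x i j ∧ x i j ≤ 1) ∧
     (∑ i, fcost i * y i = 1 / (n : ℝ) ^ 2)) ∧
    (∀ yI : Fin n → ℕ, ∀ xI : Fin n → C → ℕ,
      (∀ i, yI i ≤ 1) → (∀ i j, xI i j ≤ yI i) → (∀ j, ∑ i, xI i j = 1) →
      (∀ i, ∑ j, xI i j ≤ U * yI i) →
      yI lastF = 1 ∧ (1 : ℝ) ≤ ∑ i, fcost i * (yI i : ℝ)) ∧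
    ((1 : ℝ) / (1 / (n : ℝ) ^ 2) = (n : ℝ) ^ 2) := by
  intro U C lastF y xn x fcost
  have hnr : (2 : ℝ) ≤ (n : ℝ) := by exact_mod_cast hn
  have hn1 : (0 : ℝ) < (n : ℝ) - 1 := by linarith
  have hn2 : (0 : ℝ) < (n : ℝ) ^ 2 := by positivity
  have hU : (U : ℝ) = (n : ℝ) ^ 2 := by simp only [U]; push_cast; ring
  set m : ℝ := ((n : ℝ) - 1) * (n : ℝ) ^ 2 + 1 with hm_def
  have hm : (0 : ℝ) < m := by positivity
  have hxn : xn = 1 / m := by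
    simp only [xn, hU, div_self hn2.ne']
    rfl
  have hxnpos : 0 < xn := by rw [hxn]; positivity
  have hmge : (n : ℝ) ^ 2 ≤ m := by nlinarith
  have hxnle : xn ≤ 1 / (n : ℝ) ^ 2 := by
    rw [hxn]; exact one_div_le_one_div_of_le hn2 hmge
  have hxnle1 : xn ≤ 1 := by
    have : 1 / (n : ℝ) ^ 2 ≤ 1 := by
      rw [div_le_one hn2]; nlinarith
    linarith
  have hcastm : (((n - 1) * U + 1 : ℕ) : ℝ) = m := by
    simp only [U, hm_def]
    push_cast [Nat.cast_sub (by omega : 1 ≤ n)]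
    ring
  refine ⟨⟨?_, ?_, ?_, ?_, ?_, ?_⟩, ?_, ?_⟩
  · -- x ≤ y
    intro i j
    by_cases h : i = lastF
    · simp only [x, y, if_pos h]; exact hxnle
    · simp only [x, y, if_neg h]
      rw [div_le_one hn1]; linarith
  · -- assignment constraint
    intro j
    simp only [x]
    rw [sum_ite_fin]
    field_simp
    ring
  · -- capacity constraint
    intro i
    simp only [x]
    rw [Finset.sum_const, Finset.card_univ]
    have hcard : (Fintype.card C : ℝ) = m := by
      simp only [C, Fintype.card_fin]; exact hcastm
    rw [nsmul_eq_mul, hcard]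
    by_cases h : i = lastF
    · simp only [y, if_pos h, hU, hxn]
      rw [mul_one_div, div_self hm.ne']
      rw [mul_one_div, div_self hn2.ne']
    · simp only [y, if_neg h, mul_one, hU, hxn]
      have : m * ((1 - 1 / m) / ((n : ℝ) - 1)) = (n : ℝ) ^ 2 := by
        field_simp
        ring
      rw [this]
  · -- y bounds
    intro i
    by_cases h : i = lastF <;> simp only [y, if_pos, if_neg, h] <;>
      constructor <;> first | positivity | (rw [div_le_one hn2]; nlinarith) | norm_num
  · -- x bounds
    intro i j
    by_cases h : i = lastF
    · simp only [x, if_pos h]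
      exact ⟨hxnpos.le, hxnle1⟩
    · simp only [x, if_neg h]
      constructor
      · exact div_nonneg (by linarith) hn1.le
      · rw [div_le_one hn1]; linarith
  · -- fractional cost
    have : ∀ i : Fin n, fcost i * y i = if i = lastF then 1 / (n : ℝ) ^ 2 else 0 := by
      intro i; by_cases h : i = lastF <;> simp [fcost, y, h]
    rw [Finset.sum_congr rfl (fun i _ => this i), Fintype.sum_ite_eq']
  · -- integral part
    intro yI xI h1 h2 h3 h4
    have hylast : yI lastF = 1 := by
      by_contra hne
      have hy0 : yI lastF = 0 := by have := h1 lastF; omega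
      have hswap : ∑ i, ∑ j, xI i j = (n - 1) * U + 1 := by
        rw [Finset.sum_comm]
        simp only [h3, Finset.sum_const, Finset.card_univ, smul_eq_mul, mul_one]
        simp [C]
      have hle : ∑ i, ∑ j, xI i j ≤ U * ∑ i, yI i := by
        rw [Finset.mul_sum]
        exact Finset.sum_le_sum (fun i _ => h4 i)
      have hysum : ∑ i, yI i ≤ n - 1 := by
        rw [← Finset.add_sum_erase _ _ (Finset.mem_univ lastF), hy0, zero_add]
        calc ∑ i ∈ Finset.univ.erase lastF, yI i
            ≤ ∑ _i ∈ Finset.univ.erase lastF, 1 :=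
              Finset.sum_le_sum (fun i hi => h1 i)
          _ = n - 1 := by
              simp [Finset.card_erase_of_mem, Finset.card_univ]
      have hfinal : (n - 1) * U + 1 ≤ U * (n - 1) := by
        calc (n - 1) * U + 1 = ∑ i, ∑ j, xI i j := hswap.symm
          _ ≤ U * ∑ i, yI i := hle
          _ ≤ U * (n - 1) := Nat.mul_le_mul_left U hysum
      have hcomm : (n - 1) * U = U * (n - 1) := Nat.mul_comm _ _
      omega
    refine ⟨hylast, ?_⟩
    have : ∀ i : Fin n, fcost i * (yI i : ℝ) = if i = lastF then (yI i : ℝ) else 0 := by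
      intro i; by_cases h : i = lastF <;> simp [fcost, h]
    rw [Finset.sum_congr rfl (fun i _ => this i), Fintype.sum_ite_eq', hylast]
    norm_num
  · rw [one_div_one_div]
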